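/- Let a, b, c > 0 with c < b²/(4a) and let r₋ = (b - √(b² - 4ac))/(2a). Then r₋ ≤ c/b + (c/b) · Σ_{n=1}^∞ (2ac/b²)ⁿ, where the geometric series converges since 2ac/b² < 1. -/

import Mathlib

theorem root_series_bound (a b c : ℝ) (ha : 0 < a) (hb : 0 < b) (hc : 0 < c)
    (hpar : c < b ^ 2 / (4 * a)) :
    (2 * a * c / b ^ 2 < 1) ∧
    (b - Real.sqrt (b ^ 2 - 4 * a * c)) / (2 * a) ≤
      c / b + (c / b) * ∑' n : ℕ, (2 * a * c / b ^ 2) ^ (n + 1) := by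
  have hb2 : (0:ℝ) < b ^ 2 := by positivity
  have h4ac : 4 * a * c < b ^ 2 := by
    rw [lt_div_iff₀ (by positivity)] at hpar
    nlinarith
  set q : ℝ := 2 * a * c / b ^ 2 with hq
  have hq0 : 0 ≤ q := by positivity
  have hq1 : q < 1 := by
    rw [hq, div_lt_one hb2]; nlinarith
  refine ⟨hq1, ?_⟩
  have htsum : ∑' n : ℕ, q ^ (n + 1) = q * (1 - q)⁻¹ := by
    have : ∀ n : ℕ, q ^ (n + 1) = q ^ n * q := fun n => pow_succ q n
    simp_rw [this]
    rw [tsum_mul_right, tsum_geometric_of_lt_one hq0 hq1, mul_comm]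
  rw [htsum]
  have hD : (0:ℝ) ≤ b ^ 2 - 4 * a * c := by linarith
  set s : ℝ := Real.sqrt (b ^ 2 - 4 * a * c) with hs
  have hs2 : s ^ 2 = b ^ 2 - 4 * a * c := Real.sq_sqrt hD
  have hsnn : 0 ≤ s := Real.sqrt_nonneg _
  have hden : 0 < b ^ 2 - 2 * a * c := by nlinarith
  have hsb : s * b ≤ b ^ 2 - 2 * a * c := by
    nlinarith [sq_nonneg (s * b - (b ^ 2 - 2 * a * c)), sq_nonneg (2 * a * c)]
  have h1q : (1 - q)⁻¹ = b ^ 2 / (b ^ 2 - 2 * a * c) := by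
    rw [hq]; field_simp
  rw [h1q]
  rw [div_add' _ _ _ (ne_of_gt hb), div_le_div_iff₀ (by positivity) (by positivity)]
  have hq' : q = 2 * a * c / b ^ 2 := hq
  field_simp [hq']
  have hbq : b ^ 2 * q = 2 * a * c := by rw [hq']; field_simp
  rw [hbq, show c * 2 * a = 2 * a * c by ring, one_add_div hden.ne', mul_div_assoc', le_div_iff₀ hden]
  have hs2b : b ^ 3 * s ^ 2 = b ^ 3 * (b ^ 2 - 4 * a * c) := by rw [hs2]
  nlinarith [mul_le_mul_of_nonneg_left (mul_le_mul_of_nonneg_left hsb hsnn) hb2.le, hs2b]
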